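/- arXiv:1105.0663 — 2 statements merged into one kernel-verified Lean document; each statement's English description precedes it below -/
import Mathlib

section
/- Let s ≥ 1 and let μ be the probability measure placing mass 1/(8s) on each of the 4s shifts of (1^s 0^{3s})^* and each of the 4s shifts of (1^{3s} 0^s)^*. Then for every k ≤ s, μ([0^k]) = μ([1^k]) = 1/2 − (k−1)/(4s). -/
open MeasureTheory
open scoped ENNReal

lemma hTiff (n t k j : ℕ) (hn : j < n) (hk : 1 ≤ k) (htn : t < n) :
    (∀ i < k, (i + j) % n < t) ↔ j + k ≤ t := by
  constructor
  · intro h; by_contra hc; push_neg at hc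
    rcases le_or_gt (j + k) n with h1 | h1
    · have h2 := h (k-1) (by omega)
      rw [Nat.mod_eq_of_lt (by omega)] at h2; omega
    · have h2 := h (n-1-j) (by omega)
      rw [Nat.mod_eq_of_lt (by omega)] at h2; omega
  · intro h i hi; rw [Nat.mod_eq_of_lt (by omega)]; omega

lemma hFiff (n t k j : ℕ) (hn : j < n) (hk : 1 ≤ k) (ht : 1 ≤ t) :
    (∀ i < k, t ≤ (i + j) % n) ↔ t ≤ j ∧ j + k ≤ n := by
  constructor
  · intro h
    have h0 := h 0 hk
    rw [Nat.mod_eq_of_lt (by omega)] at h0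
    refine ⟨by omega, ?_⟩
    by_contra hc; push_neg at hc
    have h2 := h (n - j) (by omega)
    rw [show n - j + j = n from by omega, Nat.mod_self] at h2
    omega
  · rintro ⟨h1, h2⟩ i hi; rw [Nat.mod_eq_of_lt (by omega)]; omega

lemma arith (s k : ℕ) (hs : 1 ≤ s) (hk : 1 ≤ k) (hks : k ≤ s) :
    (8 * (s : ℝ≥0∞))⁻¹ * ((4 * s - 2 * k + 2 : ℕ) : ℝ≥0∞)
      = 1 / 2 - ((k - 1 : ℕ) : ℝ≥0∞) / (4 * s) := by
  have hs0 : ((s : ℝ≥0∞)) ≠ 0 := by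
    simpa using (by omega : s ≠ 0)
  have hstop : ((s : ℝ≥0∞)) ≠ ⊤ := ENNReal.natCast_ne_top s
  have h4 : (4 * (s : ℝ≥0∞)) ≠ 0 := by simp [hs0]
  have h4t : (4 * (s : ℝ≥0∞)) ≠ ⊤ := ENNReal.mul_ne_top (by norm_num) hstop
  refine ENNReal.eq_sub_of_add_eq (ENNReal.div_lt_top (ENNReal.natCast_ne_top _) h4).ne ?_
  rw [mul_comm, ← div_eq_mul_inv]
  have h1 : ((k - 1 : ℕ) : ℝ≥0∞) / (4 * s) = (2 * ((k-1:ℕ) : ℝ≥0∞)) / (8 * s) := by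
    rw [show (8 : ℝ≥0∞) * s = 2 * (4 * s) by ring]
    rw [ENNReal.mul_div_mul_left _ _ (by norm_num) (by norm_num)]
  rw [h1, ENNReal.div_add_div_same]
  have h2 : ((4 * s - 2 * k + 2 : ℕ) : ℝ≥0∞) + 2 * ((k-1:ℕ) : ℝ≥0∞) = ((4 * s : ℕ) : ℝ≥0∞) := by
    rw [show (2 : ℝ≥0∞) = ((2:ℕ):ℝ≥0∞) by norm_num, ← Nat.cast_mul, ← Nat.cast_add]
    congr 1; omega
  rw [h2]
  rw [show ((4 * s : ℕ) : ℝ≥0∞) = (4 * s : ℝ≥0∞) * 1 by push_cast; ring,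
      show (8 : ℝ≥0∞) * s = (4 * s : ℝ≥0∞) * 2 by ring,
      ENNReal.mul_div_mul_left _ _ h4 h4t]

/-- For `s ≥ 1`, the uniform measure on the `8s` points given by the `4s` shifts of
`(1^s0^{3s})^*` together with the `4s` shifts of `(1^{3s}0^s)^*` gives the cylinders
`[0^k]` and `[1^k]` (for `1 ≤ k ≤ s`) mass `1/2 − (k−1)/(4s)`. -/
theorem stmt7 (s : ℕ) (hs : 1 ≤ s) (μ : Measure (ℕ → Bool))
    (hμ : μ = (8 * (s : ℝ≥0∞))⁻¹ •
      ∑ j ∈ Finset.range (4 * s),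
        (Measure.dirac (fun i : ℕ => decide ((i + j) % (4 * s) < s)) +
         Measure.dirac (fun i : ℕ => decide ((i + j) % (4 * s) < 3 * s)))) :
    ∀ k : ℕ, 1 ≤ k → k ≤ s →
      μ {ω | ∀ i < k, ω i = false} = 1 / 2 - (k - 1 : ℕ) / (4 * s) ∧
      μ {ω | ∀ i < k, ω i = true} = 1 / 2 - (k - 1 : ℕ) / (4 * s) := by
  intro k hk1 hks
  have hmeas : ∀ b : Bool, MeasurableSet {ω : ℕ → Bool | ∀ i < k, ω i = b} := by
    intro b
    have h : {ω : ℕ → Bool | ∀ i < k, ω i = b}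
        = ⋂ i ∈ Set.Iio k, (fun ω : ℕ → Bool => ω i) ⁻¹' {b} := by
      ext ω; simp
    rw [h]
    exact MeasurableSet.biInter (Set.to_countable _)
      fun i _ => (measurable_pi_apply i) (measurableSet_singleton b)
  constructor
  · rw [hμ, Measure.smul_apply, Measure.finset_sum_apply]
    have hcongr : ∀ j ∈ Finset.range (4*s),
        ((Measure.dirac (fun i : ℕ => decide ((i + j) % (4 * s) < s)) +
          Measure.dirac (fun i : ℕ => decide ((i + j) % (4 * s) < 3 * s)))
          {ω | ∀ i < k, ω i = false})
        = ((if s ≤ j ∧ j + k ≤ 4*s then (1:ℝ≥0∞) else 0)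
          + (if 3*s ≤ j ∧ j + k ≤ 4*s then (1:ℝ≥0∞) else 0)) := by
      intro j hj
      rw [Finset.mem_range] at hj
      rw [Measure.add_apply, Measure.dirac_apply' _ (hmeas false),
        Measure.dirac_apply' _ (hmeas false), Set.indicator_apply, Set.indicator_apply]
      have i1 : (fun i : ℕ => decide ((i + j) % (4 * s) < s))
          ∈ {ω : ℕ → Bool | ∀ i < k, ω i = false} ↔ (s ≤ j ∧ j + k ≤ 4*s) := by
        simp only [Set.mem_setOf_eq, decide_eq_false_iff_not, not_lt]
        exact hFiff (4*s) s k j hj hk1 hs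
      have i2 : (fun i : ℕ => decide ((i + j) % (4 * s) < 3*s))
          ∈ {ω : ℕ → Bool | ∀ i < k, ω i = false} ↔ (3*s ≤ j ∧ j + k ≤ 4*s) := by
        simp only [Set.mem_setOf_eq, decide_eq_false_iff_not, not_lt]
        exact hFiff (4*s) (3*s) k j hj hk1 (by omega)
      rw [if_congr i1 rfl rfl, if_congr i2 rfl rfl]
      simp
    rw [Finset.sum_congr rfl hcongr, Finset.sum_add_distrib, Finset.sum_boole, Finset.sum_boole]
    have e1 : (Finset.range (4*s)).filter (fun j => s ≤ j ∧ j + k ≤ 4*s)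
        = Finset.Icc s (4*s - k) := by
      ext j; simp only [Finset.mem_filter, Finset.mem_range, Finset.mem_Icc]; omega
    have e2 : (Finset.range (4*s)).filter (fun j => 3*s ≤ j ∧ j + k ≤ 4*s)
        = Finset.Icc (3*s) (4*s - k) := by
      ext j; simp only [Finset.mem_filter, Finset.mem_range, Finset.mem_Icc]; omega
    rw [e1, e2, Nat.card_Icc, Nat.card_Icc, smul_eq_mul, ← Nat.cast_add]
    rw [show (4*s - k + 1 - s) + (4*s - k + 1 - 3*s) = 4*s - 2*k + 2 from by omega]
    exact arith s k hs hk1 hks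
  · rw [hμ, Measure.smul_apply, Measure.finset_sum_apply]
    have hcongr : ∀ j ∈ Finset.range (4*s),
        ((Measure.dirac (fun i : ℕ => decide ((i + j) % (4 * s) < s)) +
          Measure.dirac (fun i : ℕ => decide ((i + j) % (4 * s) < 3 * s)))
          {ω | ∀ i < k, ω i = true})
        = ((if j + k ≤ s then (1:ℝ≥0∞) else 0)
          + (if j + k ≤ 3*s then (1:ℝ≥0∞) else 0)) := by
      intro j hj
      rw [Finset.mem_range] at hj
      rw [Measure.add_apply, Measure.dirac_apply' _ (hmeas true),
        Measure.dirac_apply' _ (hmeas true), Set.indicator_apply, Set.indicator_apply]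
      have i1 : (fun i : ℕ => decide ((i + j) % (4 * s) < s))
          ∈ {ω : ℕ → Bool | ∀ i < k, ω i = true} ↔ (j + k ≤ s) := by
        simp only [Set.mem_setOf_eq, decide_eq_true_eq]
        exact hTiff (4*s) s k j hj hk1 (by omega)
      have i2 : (fun i : ℕ => decide ((i + j) % (4 * s) < 3*s))
          ∈ {ω : ℕ → Bool | ∀ i < k, ω i = true} ↔ (j + k ≤ 3*s) := by
        simp only [Set.mem_setOf_eq, decide_eq_true_eq]
        exact hTiff (4*s) (3*s) k j hj hk1 (by omega)
      rw [if_congr i1 rfl rfl, if_congr i2 rfl rfl]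
      simp
    rw [Finset.sum_congr rfl hcongr, Finset.sum_add_distrib, Finset.sum_boole, Finset.sum_boole]
    have e1 : (Finset.range (4*s)).filter (fun j => j + k ≤ s)
        = Finset.Icc 0 (s - k) := by
      ext j; simp only [Finset.mem_filter, Finset.mem_range, Finset.mem_Icc]; omega
    have e2 : (Finset.range (4*s)).filter (fun j => j + k ≤ 3*s)
        = Finset.Icc 0 (3*s - k) := by
      ext j; simp only [Finset.mem_filter, Finset.mem_range, Finset.mem_Icc]; omega
    rw [e1, e2, Nat.card_Icc, Nat.card_Icc, smul_eq_mul, ← Nat.cast_add]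
    rw [show (s - k + 1 - 0) + (3*s - k + 1 - 0) = 4*s - 2*k + 2 from by omega]
    exact arith s k hs hk1 hks
end

section
/- Let s ≥ 1 and k ≤ s. Consider the measure μ_s placing mass 1/(8s) on each of the 4s shifts of (1^s0^{3s})^* and each of the 4s shifts of (1^{3s}0^s)^*, and the measure ν placing mass 1/2 on each of 0^* and 1^*. Then for every cylinder [σ] with length(σ) ≤ k, |μ_s([σ]) − ν([σ])| ≤ k/(4s). -/
open MeasureTheory
open scoped ENNReal

private lemma mod_ite (x m : ℕ) (h : x < 2*m) : x % m = if x < m then x else x - m := by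
  split
  · exact Nat.mod_eq_of_lt ‹_›
  · rw [Nat.mod_eq_sub_mod (by omega)]
    exact Nat.mod_eq_of_lt (by omega)

private lemma exists_change (g : ℕ → Bool) (a b : ℕ) (h : a ≤ b) (hg : g a ≠ g b) :
    ∃ i, a ≤ i ∧ i < b ∧ g i ≠ g (i+1) := by
  induction b, h using Nat.le_induction with
  | base => exact absurd rfl hg
  | succ b hb ih =>
    by_cases hab : g a = g b
    · exact ⟨b, hb, lt_add_one b, fun h => hg (hab.trans h)⟩
    · obtain ⟨i, h1, h2, h3⟩ := ih hab
      exact ⟨i, h1, by omega, h3⟩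

private lemma classify (g : ℕ → Bool) (L : ℕ) :
    (∀ i < L, g i = g 0) ∨
    (∃ a, 1 ≤ a ∧ a < L ∧ ∀ i < L, (g i = true ↔ ((i < a) ↔ (g 0 = true)))) ∨
    (∃ i i', i + 1 ≤ i' ∧ i' + 1 < L ∧ g i ≠ g (i+1) ∧ g i' ≠ g (i'+1)) := by
  by_cases hA : ∀ i < L, g i = g 0
  · exact Or.inl hA
  push_neg at hA
  have hex : ∃ n, n < L ∧ g n ≠ g 0 := hA
  classical
  obtain ⟨a, ⟨haL, hane⟩, hmin'⟩ :
      ∃ a, (a < L ∧ g a ≠ g 0) ∧ ∀ b, b < a → ¬(b < L ∧ g b ≠ g 0) :=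
    ⟨Nat.find hex, Nat.find_spec hex, fun b hb => Nat.find_min hex hb⟩
  have hmin : ∀ b, b < a → b < L → g b = g 0 := by
    intro b hb hbL
    have := hmin' b hb
    push_neg at this
    exact this hbL
  have ha1 : 1 ≤ a := by
    rcases Nat.eq_zero_or_pos a with h | h
    · subst h; exact absurd rfl hane
    · exact h
  by_cases hB : ∀ i, a ≤ i → i < L → g i = g a
  · refine Or.inr (Or.inl ⟨a, ha1, haL, ?_⟩)
    intro i hiL
    by_cases hia : i < a
    · have h := hmin i hia hiL
      rw [h]
      simp [hia]
    · have h := hB i (by omega) hiL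
      rw [h]
      revert hane; cases g 0 <;> cases g a <;> simp [hia]
  · push_neg at hB
    obtain ⟨i', hai', hi'L, hgi'⟩ := hB
    obtain ⟨c, hc1, hc2, hc3⟩ := exists_change g a i' hai' (fun h => hgi' h.symm)
    refine Or.inr (Or.inr ⟨a - 1, c, by omega, by omega, ?_, hc3⟩)
    have h1 : g (a-1) = g 0 := hmin (a-1) (by omega) (by omega)
    have h2 : a - 1 + 1 = a := by omega
    rw [h1, h2]
    exact fun h => hane h.symm

section counts
variable (s t L : ℕ) (g : ℕ → Bool)

private lemma count_const_true (hL1 : 1 ≤ L) (hLs : L ≤ s)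
    (hst : s ≤ t) (ht3 : t ≤ 3*s) (hg : ∀ i < L, g i = true) :
    ((Finset.range (4*s)).filter
      (fun j => ∀ i < L, ((i+j) % (4*s) < t ↔ g i = true))).card = t + 1 - L := by
  refine Eq.trans (congrArg Finset.card ?_) (Finset.card_range _)
  ext j
  simp only [Finset.mem_filter, Finset.mem_range]
  constructor
  · rintro ⟨hj, hP⟩
    by_contra hcon
    rcases lt_or_ge j t with h | h
    · have h2 := (hP (t - j) (by omega)).mpr (hg _ (by omega))
      rw [Nat.mod_eq_of_lt (by omega)] at h2
      omega
    · have h2 := (hP 0 (by omega)).mpr (hg 0 (by omega))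
      rw [Nat.mod_eq_of_lt (by omega)] at h2
      omega
  · intro hj
    refine ⟨by omega, fun i hi => ?_⟩
    rw [hg i hi, Nat.mod_eq_of_lt (by omega)]
    simp only [iff_true]
    omega

private lemma count_const_false (hL1 : 1 ≤ L) (hLs : L ≤ s)
    (hst : s ≤ t) (ht3 : t ≤ 3*s) (hg : ∀ i < L, g i = false) :
    ((Finset.range (4*s)).filter
      (fun j => ∀ i < L, ((i+j) % (4*s) < t ↔ g i = true))).card = 4*s + 1 - L - t := by
  have : ((Finset.range (4*s)).filter
      (fun j => ∀ i < L, ((i+j) % (4*s) < t ↔ g i = true))) = Finset.Ico t (4*s+1-L) := by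
    ext j
    simp only [Finset.mem_filter, Finset.mem_range, Finset.mem_Ico]
    constructor
    · rintro ⟨hj, hP⟩
      constructor
      · by_contra h
        have h2 := hP 0 (by omega)
        rw [hg 0 (by omega), Nat.mod_eq_of_lt (by omega)] at h2
        simp at h2
        omega
      · by_contra h
        have h2 := hP (4*s - j) (by omega)
        have h3 : 4*s - j + j = 4*s := by omega
        rw [hg _ (by omega), h3, Nat.mod_self] at h2
        simp at h2
        omega
    · rintro ⟨h1, h2⟩
      refine ⟨by omega, fun i hi => ?_⟩
      rw [hg i hi, Nat.mod_eq_of_lt (by omega)]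
      simp only [Bool.false_eq_true, iff_false]
      omega
  rw [this, Nat.card_Ico]

private lemma count_step_true (a : ℕ) (hLs : L ≤ s)
    (hst : s ≤ t) (ht3 : t ≤ 3*s) (ha1 : 1 ≤ a) (haL : a < L)
    (hg : ∀ i < L, (g i = true ↔ i < a)) :
    ((Finset.range (4*s)).filter
      (fun j => ∀ i < L, ((i+j) % (4*s) < t ↔ g i = true))).card = 1 := by
  have : ((Finset.range (4*s)).filter
      (fun j => ∀ i < L, ((i+j) % (4*s) < t ↔ g i = true))) = {t - a} := by
    ext j
    simp only [Finset.mem_filter, Finset.mem_range, Finset.mem_singleton]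
    constructor
    · rintro ⟨hj, hP⟩
      have h1 := (hP (a-1) (by omega)).mpr ((hg (a-1) (by omega)).mpr (by omega))
      have h2 : ¬ ((a+j) % (4*s) < t) := fun hcon =>
        (by omega : ¬ a < a) ((hg a (by omega)).mp ((hP a (by omega)).mp hcon))
      rw [mod_ite (a-1+j) (4*s) (by omega)] at h1
      rw [mod_ite (a+j) (4*s) (by omega)] at h2
      split_ifs at h1 h2 <;> omega
    · intro hj
      subst hj
      refine ⟨by omega, fun i hi => ?_⟩
      rw [hg i hi, Nat.mod_eq_of_lt (by omega)]
      omega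
  rw [this, Finset.card_singleton]

private lemma count_step_false (a : ℕ) (hLs : L ≤ s)
    (hst : s ≤ t) (ht3 : t ≤ 3*s) (ha1 : 1 ≤ a) (haL : a < L)
    (hg : ∀ i < L, (g i = true ↔ a ≤ i)) :
    ((Finset.range (4*s)).filter
      (fun j => ∀ i < L, ((i+j) % (4*s) < t ↔ g i = true))).card = 1 := by
  have : ((Finset.range (4*s)).filter
      (fun j => ∀ i < L, ((i+j) % (4*s) < t ↔ g i = true))) = {4*s - a} := by
    ext j
    simp only [Finset.mem_filter, Finset.mem_range, Finset.mem_singleton]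
    constructor
    · rintro ⟨hj, hP⟩
      have h1 : ¬ ((a-1+j) % (4*s) < t) := fun hcon =>
        (by omega : ¬ a ≤ a-1) ((hg (a-1) (by omega)).mp ((hP (a-1) (by omega)).mp hcon))
      have h2 := (hP a (by omega)).mpr ((hg a (by omega)).mpr (by omega))
      rw [mod_ite (a-1+j) (4*s) (by omega)] at h1
      rw [mod_ite (a+j) (4*s) (by omega)] at h2
      split_ifs at h1 h2 <;> omega
    · intro hj
      subst hj
      refine ⟨by omega, fun i hi => ?_⟩
      rw [hg i hi, mod_ite (i + (4*s-a)) (4*s) (by omega)]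
      split_ifs <;> omega
  rw [this, Finset.card_singleton]

private lemma count_zero (i0 i1 : ℕ) (hLs : L ≤ s)
    (hst : s ≤ t) (ht3 : t ≤ 3*s) (h01 : i0 + 1 ≤ i1) (h1L : i1 + 1 < L)
    (hc0 : g i0 ≠ g (i0+1)) (hc1 : g i1 ≠ g (i1+1)) :
    ((Finset.range (4*s)).filter
      (fun j => ∀ i < L, ((i+j) % (4*s) < t ↔ g i = true))).card = 0 := by
  rw [Finset.card_eq_zero, Finset.eq_empty_iff_forall_notMem]
  intro j hj
  simp only [Finset.mem_filter, Finset.mem_range] at hj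
  obtain ⟨hj, hP⟩ := hj
  have e1 : ((i0+j) % (4*s) < t ↔ ¬ ((i0+1+j) % (4*s) < t)) := by
    rw [hP i0 (by omega), hP (i0+1) (by omega)]
    revert hc0; cases g i0 <;> cases g (i0+1) <;> simp
  have e2 : ((i1+j) % (4*s) < t ↔ ¬ ((i1+1+j) % (4*s) < t)) := by
    rw [hP i1 (by omega), hP (i1+1) (by omega)]
    revert hc1; cases g i1 <;> cases g (i1+1) <;> simp
  rw [mod_ite (i0+j) (4*s) (by omega), mod_ite (i0+1+j) (4*s) (by omega)] at e1
  rw [mod_ite (i1+j) (4*s) (by omega), mod_ite (i1+1+j) (4*s) (by omega)] at e2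
  split_ifs at e1 e2 <;> omega

end counts

private lemma abs_helper (s k : ℕ) (u v : ℝ) (hs : 1 ≤ s)
    (h : |u - 8*(s:ℝ)*v| ≤ 2*k) : |u/(8*(s:ℝ)) - v| ≤ (k:ℝ)/(4*s) := by
  have hs0 : (0:ℝ) < s := by exact_mod_cast Nat.lt_of_lt_of_le Nat.zero_lt_one hs
  have h8 : (0:ℝ) < 8*s := by positivity
  have he : u/(8*(s:ℝ)) - v = (u - 8*s*v)/(8*s) := by field_simp
  rw [he, abs_div, abs_of_pos h8, div_le_div_iff₀ h8 (by positivity)]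
  nlinarith [abs_nonneg (u - 8*(s:ℝ)*v)]

/-- Let `s ≥ 1` and `k ≤ s`.  With `μ` the uniform measure on the `8s` shifts of
`(1^s0^{3s})^*` and `(1^{3s}0^s)^*`, and `ν` the measure putting mass `1/2` on each of
`0^*` and `1^*`: for every cylinder `[σ]` with `length σ ≤ k`,
`|μ [σ] − ν [σ]| ≤ k/(4s)`. -/
theorem stmt17 (s k : ℕ) (hs : 1 ≤ s) (hk : k ≤ s)
    (μ ν : Measure (ℕ → Bool))
    (hμ : μ = (8 * (s : ℝ≥0∞))⁻¹ •
      ∑ j ∈ Finset.range (4 * s),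
        (Measure.dirac (fun i : ℕ => decide ((i + j) % (4 * s) < s)) +
         Measure.dirac (fun i : ℕ => decide ((i + j) % (4 * s) < 3 * s))))
    (hν : ν = (2 : ℝ≥0∞)⁻¹ • Measure.dirac (fun _ : ℕ => false) +
              (2 : ℝ≥0∞)⁻¹ • Measure.dirac (fun _ : ℕ => true)) :
    ∀ σ : List Bool, σ.length ≤ k →
      |(μ {ω | ∀ i < σ.length, ω i = σ.getD i false}).toReal -
        (ν {ω | ∀ i < σ.length, ω i = σ.getD i false}).toReal| ≤ (k : ℝ) / (4 * s) := by
  subst hμ hν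
  intro σ hσk
  have hLs : σ.length ≤ s := hσk.trans hk
  set Scyl : Set (ℕ → Bool) := {ω | ∀ i < σ.length, ω i = σ.getD i false} with hSdef
  have hS : MeasurableSet Scyl := by
    have h : Scyl = ⋂ i ∈ Finset.range σ.length,
        (fun ω : ℕ → Bool => ω i) ⁻¹' {σ.getD i false} := by
      ext ω
      simp [hSdef, Set.mem_iInter]
    rw [h]
    exact Finset.measurableSet_biInter _
      (fun i _ => (measurable_pi_apply i) (measurableSet_singleton _))
  -- μ value
  have hmem : ∀ (t j : ℕ),
      ((fun i : ℕ => decide ((i + j) % (4*s) < t)) ∈ Scyl) ↔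
      (∀ i < σ.length, ((i+j) % (4*s) < t ↔ σ.getD i false = true)) := by
    intro t j
    rw [hSdef]
    simp only [Set.mem_setOf_eq]
    refine forall₂_congr fun i hi => ?_
    cases h : σ.getD i false <;> simp [h]
  have hμval : (((8 * (s : ℝ≥0∞))⁻¹ •
      ∑ j ∈ Finset.range (4 * s),
        (Measure.dirac (fun i : ℕ => decide ((i + j) % (4 * s) < s)) +
         Measure.dirac (fun i : ℕ => decide ((i + j) % (4 * s) < 3 * s)))) Scyl).toReal
      = ((((Finset.range (4*s)).filter
            (fun j => ∀ i < σ.length, ((i+j) % (4*s) < s ↔ σ.getD i false = true))).card : ℝ)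
        + (((Finset.range (4*s)).filter
            (fun j => ∀ i < σ.length, ((i+j) % (4*s) < 3*s ↔ σ.getD i false = true))).card : ℝ))
        / (8*s) := by
    classical
    rw [Measure.smul_apply, Measure.finset_sum_apply]
    simp only [Measure.add_apply, Measure.dirac_apply' _ hS, Set.indicator_apply, Pi.one_apply]
    rw [Finset.sum_add_distrib]
    simp only [hmem]
    rw [Finset.sum_boole, Finset.sum_boole]
    rw [smul_eq_mul, ENNReal.toReal_mul, ENNReal.toReal_inv,
      ENNReal.toReal_add (by simp) (by simp)]
    simp only [ENNReal.toReal_mul, ENNReal.toReal_ofNat, ENNReal.toReal_natCast]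
    have hs0 : (s:ℝ) ≠ 0 := Nat.cast_ne_zero.mpr (by omega)
    field_simp
  -- ν value
  have hνval : (((2 : ℝ≥0∞)⁻¹ • Measure.dirac (fun _ : ℕ => false) +
      (2 : ℝ≥0∞)⁻¹ • Measure.dirac (fun _ : ℕ => true)) Scyl).toReal
      = (if (fun _ : ℕ => false) ∈ Scyl then (1:ℝ)/2 else 0)
        + (if (fun _ : ℕ => true) ∈ Scyl then (1:ℝ)/2 else 0) := by
    classical
    rw [Measure.add_apply, Measure.smul_apply, Measure.smul_apply,
      Measure.dirac_apply' _ hS, Measure.dirac_apply' _ hS]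
    simp only [Set.indicator_apply, Pi.one_apply, smul_eq_mul]
    split_ifs <;> simp [ENNReal.toReal_add]
  rw [hμval, hνval]
  have hmemfalse : ((fun _ : ℕ => false) ∈ Scyl) ↔ (∀ i < σ.length, σ.getD i false = false) := by
    rw [hSdef]; simp only [Set.mem_setOf_eq]; constructor <;> intro h i hi <;> exact (h i hi).symm
  have hmemtrue : ((fun _ : ℕ => true) ∈ Scyl) ↔ (∀ i < σ.length, σ.getD i false = true) := by
    rw [hSdef]; simp only [Set.mem_setOf_eq]; constructor <;> intro h i hi <;> exact (h i hi).symm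
  have hkR : ((σ.length:ℝ)) ≤ k := by exact_mod_cast hσk
  rcases Nat.eq_zero_or_pos σ.length with hL0 | hL1
  · -- empty cylinder
    have hA : ((Finset.range (4*s)).filter
        (fun j => ∀ i < σ.length, ((i+j) % (4*s) < s ↔ σ.getD i false = true))).card = 4*s := by
      rw [Finset.filter_true_of_mem (fun j _ => fun i hi => absurd hi (by omega)),
        Finset.card_range]
    have hB : ((Finset.range (4*s)).filter
        (fun j => ∀ i < σ.length, ((i+j) % (4*s) < 3*s ↔ σ.getD i false = true))).card = 4*s := by
      rw [Finset.filter_true_of_mem (fun j _ => fun i hi => absurd hi (by omega)),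
        Finset.card_range]
    rw [hA, hB, if_pos (hmemfalse.mpr (fun i hi => absurd hi (by omega))),
      if_pos (hmemtrue.mpr (fun i hi => absurd hi (by omega)))]
    apply abs_helper s k _ _ hs
    push_cast
    rw [abs_le]
    constructor <;> nlinarith [Nat.cast_nonneg (α := ℝ) k]
  · rcases classify (fun i => σ.getD i false) σ.length with hconst | ⟨a, ha1, haL, hstep⟩ |
      ⟨i0, i1, h01, h1L, hc0, hc1⟩
    · -- constant case
      cases h0 : σ.getD 0 false with
      | true =>
        have hg : ∀ i < σ.length, σ.getD i false = true := fun i hi => (hconst i hi).trans h0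
        rw [count_const_true s s σ.length _ hL1 hLs le_rfl (by omega) hg,
          count_const_true s (3*s) σ.length _ hL1 hLs (by omega) le_rfl hg,
          if_neg, if_pos (hmemtrue.mpr hg)]
        · apply abs_helper s k _ _ hs
          rw [Nat.cast_sub (by omega), Nat.cast_sub (by omega)]
          push_cast
          rw [abs_le]
          have h1R : (1:ℝ) ≤ σ.length := by exact_mod_cast hL1
          constructor <;> nlinarith [Nat.cast_nonneg (α := ℝ) k]
        · rw [hmemfalse]
          intro hcon
          have := (hcon 0 (by omega)).symm.trans (hg 0 (by omega))
          simp at this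
      | false =>
        have hg : ∀ i < σ.length, σ.getD i false = false := fun i hi => (hconst i hi).trans h0
        rw [count_const_false s s σ.length _ hL1 hLs le_rfl (by omega) hg,
          count_const_false s (3*s) σ.length _ hL1 hLs (by omega) le_rfl hg,
          if_pos (hmemfalse.mpr hg), if_neg]
        · apply abs_helper s k _ _ hs
          rw [Nat.cast_sub (by omega), Nat.cast_sub (by omega), Nat.cast_sub (by omega),
            Nat.cast_sub (by omega)]
          push_cast
          rw [abs_le]
          have h1R : (1:ℝ) ≤ σ.length := by exact_mod_cast hL1
          constructor <;> nlinarith [Nat.cast_nonneg (α := ℝ) k]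
        · rw [hmemtrue]
          intro hcon
          have := (hcon 0 (by omega)).symm.trans (hg 0 (by omega))
          simp at this
    · -- single step case
      have hkge : (2:ℝ) ≤ k := by
        exact_mod_cast (by omega : 2 ≤ k)
      cases h0 : σ.getD 0 false with
      | true =>
        have hg : ∀ i < σ.length, (σ.getD i false = true ↔ i < a) := by
          intro i hi
          have := hstep i hi
          rw [h0] at this
          simpa using this
        rw [count_step_true s s σ.length _ a hLs le_rfl (by omega) ha1 haL hg,
          count_step_true s (3*s) σ.length _ a hLs (by omega) le_rfl ha1 haL hg,
          if_neg, if_neg]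
        · apply abs_helper s k _ _ hs
          push_cast
          rw [abs_le]
          constructor <;> nlinarith
        · rw [hmemtrue]
          intro hcon
          have := (hg a (by omega)).mp (hcon a (by omega))
          omega
        · rw [hmemfalse]
          intro hcon
          have := hcon 0 (by omega)
          have h2 := (hg 0 (by omega)).mpr (by omega)
          rw [this] at h2
          simp at h2
      | false =>
        have hg : ∀ i < σ.length, (σ.getD i false = true ↔ a ≤ i) := by
          intro i hi
          have := hstep i hi
          rw [h0] at this
          simp only [Bool.false_eq_true, iff_false, Nat.not_lt] at this
          exact this
        rw [count_step_false s s σ.length _ a hLs le_rfl (by omega) ha1 haL hg,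
          count_step_false s (3*s) σ.length _ a hLs (by omega) le_rfl ha1 haL hg,
          if_neg, if_neg]
        · apply abs_helper s k _ _ hs
          push_cast
          rw [abs_le]
          constructor <;> nlinarith
        · rw [hmemtrue]
          intro hcon
          have := (hg 0 (by omega)).mp (hcon 0 (by omega))
          omega
        · rw [hmemfalse]
          intro hcon
          have := hcon a (by omega)
          have h2 := (hg a (by omega)).mpr (by omega)
          rw [this] at h2
          simp at h2
    · -- two changes case
      have hct : ¬ ((fun _ : ℕ => true) ∈ Scyl) := by
        rw [hmemtrue]
        intro hcon
        exact hc0 (((hcon i0 (by omega)).trans ((hcon (i0+1) (by omega)).symm)))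
      have hcf : ¬ ((fun _ : ℕ => false) ∈ Scyl) := by
        rw [hmemfalse]
        intro hcon
        exact hc0 (((hcon i0 (by omega)).trans ((hcon (i0+1) (by omega)).symm)))
      rw [count_zero s s σ.length _ i0 i1 hLs le_rfl (by omega) h01 h1L hc0 hc1,
        count_zero s (3*s) σ.length _ i0 i1 hLs (by omega) le_rfl h01 h1L hc0 hc1,
        if_neg hcf, if_neg hct]
      apply abs_helper s k _ _ hs
      push_cast
      rw [abs_le]
      constructor <;> nlinarith [Nat.cast_nonneg (α := ℝ) k]
end
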